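/- Let 𝒫, 𝒬 be monic polynomials of the same degree n over ℂ satisfying the algebraic ambiguity equation A_𝒫(z,w)·A_𝒫(-z,-w) = A_𝒬(z,w)·A_𝒬(-z,-w). Then 𝒫·𝒫ˇ = 𝒬·𝒬ˇ, where 𝒫ˇ(z) = (-1)^n 𝒫(-z). -/

import Mathlib

open Polynomial

noncomputable def checkPoly (P : Polynomial ℂ) : Polynomial ℂ :=
  ((-1 : ℂ) ^ P.natDegree) • P.comp (-Polynomial.X)

noncomputable def ambPoly (P : Polynomial ℂ) (z w : ℂ) : ℂ :=
  ∑ m ∈ Finset.range (P.natDegree + 1),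
    (1 / (Nat.factorial m : ℂ)) * ((derivative^[m] P).eval z) *
      ((derivative^[m] (P.map (starRingEnd ℂ))).eval w)

lemma coeff_comp_negX (p : Polynomial ℂ) (k : ℕ) :
    (p.comp (-X)).coeff k = (-1 : ℂ)^k * p.coeff k := by
  have hx : ∀ m : ℕ, (-X : Polynomial ℂ)^m = C ((-1:ℂ)^m) * X^m := by
    intro m; rw [neg_pow]; congr 1; rw [map_pow, map_neg, map_one]
  induction p using Polynomial.induction_on' with
  | add p q hp hq => simp [add_comp, hp, hq, mul_add]
  | monomial m a =>
    rw [← C_mul_X_pow_eq_monomial, mul_comp, C_comp, pow_comp, X_comp, hx,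
      ← mul_assoc, ← C_mul, C_mul_X_pow_eq_monomial, C_mul_X_pow_eq_monomial]
    simp only [coeff_monomial]
    split <;> simp_all; ring

/-- `ambPoly P z ·` as a polynomial in the second variable. -/
noncomputable def ambW (P : Polynomial ℂ) (z : ℂ) : Polynomial ℂ :=
  ∑ m ∈ Finset.range (P.natDegree + 1),
    C ((1 / (Nat.factorial m : ℂ)) * ((derivative^[m] P).eval z)) *
      derivative^[m] (P.map (starRingEnd ℂ))

lemma ambW_eval (P : Polynomial ℂ) (z w : ℂ) :
    (ambW P z).eval w = ambPoly P z w := by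
  simp [ambW, ambPoly, eval_finset_sum]

lemma ambW_natDegree_le (P : Polynomial ℂ) (z : ℂ) :
    (ambW P z).natDegree ≤ P.natDegree := by
  apply Polynomial.natDegree_sum_le_of_forall_le
  intro m _
  refine (natDegree_C_mul_le _ _).trans ?_
  refine (natDegree_iterate_derivative _ m).trans ?_
  have : (P.map (starRingEnd ℂ)).natDegree = P.natDegree :=
    natDegree_map_eq_of_injective (starRingEnd ℂ).injective P
  omega

lemma ambW_coeff (P : Polynomial ℂ) (hP : P.Monic) (z : ℂ) :
    (ambW P z).coeff P.natDegree = P.eval z := by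
  have hmap : (P.map (starRingEnd ℂ)).natDegree = P.natDegree :=
    natDegree_map_eq_of_injective (starRingEnd ℂ).injective P
  rw [ambW, finset_sum_coeff]
  rw [Finset.sum_eq_single 0]
  · simp only [Function.iterate_zero, id, Nat.factorial_zero, Nat.cast_one, coeff_C_mul]
    have : (P.map (starRingEnd ℂ)).coeff P.natDegree = 1 := by
      rw [coeff_map, hP.coeff_natDegree, map_one]
    rw [this]; ring
  · intro m hm hm0
    rw [coeff_C_mul]
    have hd : (derivative^[m] (P.map (starRingEnd ℂ))).natDegree < P.natDegree := by
      have := natDegree_iterate_derivative (P.map (starRingEnd ℂ)) m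
      have hmle : m ≤ P.natDegree := by
        simp only [Finset.mem_range] at hm; omega
      omega
    rw [coeff_eq_zero_of_natDegree_lt hd, mul_zero]
  · intro hc; exact absurd (Finset.mem_range.2 (Nat.succ_pos _)) hc

theorem stmt10 (n : ℕ) (P Q : Polynomial ℂ)
    (hP : P.Monic) (hQ : Q.Monic)
    (hPn : P.natDegree = n) (hQn : Q.natDegree = n)
    (h : ∀ z w : ℂ, ambPoly P z w * ambPoly P (-z) (-w)
        = ambPoly Q z w * ambPoly Q (-z) (-w)) :
    P * checkPoly P = Q * checkPoly Q := by
  -- key pointwise identity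
  have key : ∀ z : ℂ, P.eval z * ((-1:ℂ)^n * P.eval (-z))
      = Q.eval z * ((-1:ℂ)^n * Q.eval (-z)) := by
    intro z
    have hFP : ∀ R : Polynomial ℂ, R.Monic → R.natDegree = n →
        (ambW R z * (ambW R (-z)).comp (-X)).coeff (n + n)
          = R.eval z * ((-1:ℂ)^n * R.eval (-z)) := by
      intro R hR hRn
      rw [coeff_mul_add_eq_of_natDegree_le (by rw [← hRn]; exact ambW_natDegree_le R z)
        (by
          refine (natDegree_comp_le).trans ?_
          have h1 := ambW_natDegree_le R (-z)
          have : (-X : Polynomial ℂ).natDegree = 1 := by simp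
          rw [this]; omega)]
      rw [coeff_comp_negX, ← hRn, ambW_coeff R hR, ambW_coeff R hR]
    have heq : ambW P z * (ambW P (-z)).comp (-X)
        = ambW Q z * (ambW Q (-z)).comp (-X) := by
      apply Polynomial.funext
      intro w
      simp only [eval_mul, eval_comp, eval_neg, eval_X, ambW_eval]
      exact h z w
    have := congrArg (fun p => p.coeff (n + n)) heq
    simpa [hFP P hP hPn, hFP Q hQ hQn] using this
  apply Polynomial.funext
  intro z
  simp only [eval_mul, checkPoly, eval_smul, smul_eq_mul, eval_comp, eval_neg, eval_X,
    hPn, hQn]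
  exact key z
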